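/- Let S be a semigroup and s : ℕ → S a sequence whose image generates S as a semigroup, such that for each n ≥ 1 the element s_n does not lie in the subsemigroup of S generated by {s_1, …, s_{n−1}}. Let (F_k)_{k≥1} be a sequence of functions ℕ → [0,∞) that is pointwise nondecreasing in k (F_k(n) ≤ F_{k+1}(n) for all k, n) and such that ℓ_{F_k}(t) ≥ 1 for every k ≥ 1 and every t ∈ S. Then there exists a function F : ℕ → [0,∞) such that for every k ≥ 1 and every real C there exists n ≥ 1 with ℓ_F(s_n) > ℓ_{F_k}(s_n) + C. Consequently, no seminorm ‖·‖_{F_k} dominates ‖·‖_F up to a multiplicative constant. -/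

import Mathlib

/-- The product `s n₀ * s n₁ * ⋯ * s nₘ` of a nonempty word `n₀ :: L` in the
generators `s : ℕ → S`. -/
def wordProd {S : Type*} [Semigroup S] (s : ℕ → S) (n : ℕ) : List ℕ → S
  | [] => s n
  | m :: L => s n * wordProd s m L

/-- The cost `F n₀ + F n₁ + ⋯ + F nₘ` of a nonempty word `n₀ :: L`. -/
def wordCost (F : ℕ → ℝ) (n : ℕ) (L : List ℕ) : ℝ :=
  F n + (L.map F).sum

/-- `ℓ_F(t) = inf { F n₁ + ⋯ + F nₘ : m ≥ 1, t = s n₁ ⋯ s nₘ }`. -/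
noncomputable def lenF {S : Type*} [Semigroup S] (s : ℕ → S) (F : ℕ → ℝ) (t : S) : ℝ :=
  sInf { r : ℝ | ∃ n L, t = wordProd s n L ∧ r = wordCost F n L }

lemma wordProd_mem_closure {S : Type*} [Semigroup S] (s : ℕ → S) (N : ℕ) :
    ∀ (L : List ℕ) (n : ℕ), n < N → (∀ m ∈ L, m < N) →
      wordProd s n L ∈ Subsemigroup.closure (s '' Set.Iio N) := by
  intro L
  induction L with
  | nil =>
      intro n hn _
      exact Subsemigroup.subset_closure ⟨n, hn, rfl⟩
  | cons m L ih =>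
      intro n hn hL
      exact mul_mem (Subsemigroup.subset_closure ⟨n, hn, rfl⟩)
        (ih m (hL m (List.mem_cons_self)) fun x hx => hL x (List.mem_cons_of_mem _ hx))

lemma le_wordCost (F : ℕ → ℝ) (hF : ∀ n, 0 ≤ F n) {m n : ℕ} {L : List ℕ}
    (hm : m ∈ n :: L) : F m ≤ wordCost F n L := by
  have hsum : 0 ≤ (L.map F).sum :=
    List.sum_nonneg (by rintro x hx; obtain ⟨y, -, rfl⟩ := List.mem_map.1 hx; exact hF y)
  rcases List.mem_cons.1 hm with rfl | hm
  · simpa [wordCost] using hsum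
  · have : F m ≤ (L.map F).sum :=
      List.single_le_sum (by rintro x hx; obtain ⟨y, -, rfl⟩ := List.mem_map.1 hx; exact hF y)
        _ (List.mem_map.2 ⟨m, hm, rfl⟩)
    have h0 := hF n
    unfold wordCost; linarith

lemma wordCost_nonneg (F : ℕ → ℝ) (hF : ∀ n, 0 ≤ F n) (n : ℕ) (L : List ℕ) :
    0 ≤ wordCost F n L := by
  have hsum : 0 ≤ (L.map F).sum :=
    List.sum_nonneg (by rintro x hx; obtain ⟨y, -, rfl⟩ := List.mem_map.1 hx; exact hF y)
  have := hF n
  unfold wordCost; linarith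

lemma Fk_mono {Fk : ℕ → ℕ → ℝ} (hmono : ∀ k n, Fk k n ≤ Fk (k + 1) n)
    {k K : ℕ} (h : k ≤ K) (n : ℕ) : Fk k n ≤ Fk K n := by
  induction h with
  | refl => exact le_refl _
  | step h ih => exact le_trans ih (hmono _ n)

/-- The diagonal argument: given a pointwise nondecreasing sequence of weight
functions `Fk` with `ℓ_{Fk k} ≥ 1` everywhere, there is a weight function `F`
such that no `ℓ_{Fk k}` dominates `ℓ_F` up to an additive constant on the
generators. -/
theorem exists_F_not_dominated {S : Type*} [Semigroup S] (s : ℕ → S)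
    (hgen : ∀ t : S, ∃ n L, t = wordProd s n L)
    (hind : ∀ n : ℕ, s n ∉ Subsemigroup.closure (s '' Set.Iio n))
    (Fk : ℕ → ℕ → ℝ) (hFk : ∀ k n, 0 ≤ Fk k n)
    (hmono : ∀ k n, Fk k n ≤ Fk (k + 1) n)
    (hone : ∀ (k : ℕ) (t : S), 1 ≤ lenF s (Fk k) t) :
    ∃ F : ℕ → ℝ, (∀ n, 0 ≤ F n) ∧
      ∀ (k : ℕ) (C : ℝ), ∃ n : ℕ, lenF s (Fk k) (s n) + C < lenF s F (s n) := by
  set F : ℕ → ℝ := fun j => (j : ℝ) + ∑ i ∈ Finset.range (j + 1), Fk i i with hFdef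
  have hF0 : ∀ j, 0 ≤ F j := by
    intro j
    have : 0 ≤ ∑ i ∈ Finset.range (j + 1), Fk i i :=
      Finset.sum_nonneg fun i _ => hFk i i
    positivity
  refine ⟨F, hF0, ?_⟩
  intro k C
  obtain ⟨n, hkn, hCn⟩ : ∃ n : ℕ, k ≤ n ∧ C < (n : ℝ) := by
    refine ⟨max k (⌈C⌉₊ + 1), le_max_left _ _, ?_⟩
    calc C ≤ (⌈C⌉₊ : ℝ) := Nat.le_ceil C
      _ < (⌈C⌉₊ + 1 : ℕ) := by push_cast; linarith
      _ ≤ _ := by exact_mod_cast Nat.cast_le.2 (le_max_right _ _)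
  refine ⟨n, ?_⟩
  -- upper bound: lenF (Fk k) (s n) ≤ Fk k n
  have hub : lenF s (Fk k) (s n) ≤ Fk k n := by
    have hmem : Fk k n ∈ { r : ℝ | ∃ m L, s n = wordProd s m L ∧ r = wordCost (Fk k) m L } :=
      ⟨n, [], rfl, by simp [wordCost]⟩
    have hbdd : BddBelow { r : ℝ | ∃ m L, s n = wordProd s m L ∧ r = wordCost (Fk k) m L } := by
      refine ⟨0, ?_⟩
      rintro r ⟨m, L, -, rfl⟩
      exact wordCost_nonneg _ (hFk k) m L
    exact csInf_le hbdd hmem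
  -- lower bound: lenF F (s n) ≥ n + Fk k n
  have hlb : (n : ℝ) + Fk k n ≤ lenF s F (s n) := by
    refine le_csInf ⟨wordCost F n [], n, [], rfl, rfl⟩ ?_
    rintro r ⟨m, L, hprod, rfl⟩
    -- some letter of m :: L is ≥ n
    obtain ⟨j, hjmem, hjn⟩ : ∃ j ∈ m :: L, n ≤ j := by
      by_contra h
      push_neg at h
      exact hind n (hprod ▸ wordProd_mem_closure s n L m
        (h m (List.mem_cons_self)) fun x hx => h x (List.mem_cons_of_mem _ hx))
    have h1 : F j ≤ wordCost F m L := le_wordCost F hF0 hjmem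
    have h2 : (n : ℝ) + Fk k n ≤ F j := by
      have hnj : (n : ℝ) ≤ j := by exact_mod_cast hjn
      have hsum : Fk n n ≤ ∑ i ∈ Finset.range (j + 1), Fk i i := by
        have hn : n ∈ Finset.range (j + 1) := Finset.mem_range.2 (Nat.lt_succ_of_le hjn)
        exact Finset.single_le_sum (fun i _ => hFk i i) hn
      have hmn : Fk k n ≤ Fk n n := Fk_mono hmono hkn n
      simp only [hFdef]
      linarith
    linarith
  linarith
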